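/- Let A be an m×m real matrix. If there exists a sequence x_n ∈ Im(A) with ‖x_n‖ → ∞ and x_n + A(x_n^3) → 0, then F_A(x) = x + (Ax)^3 is non-proper and 0 ∈ S_{F_A}. -/

import Mathlib

open Filter Matrix

theorem stmt16 {m : ℕ} (A : Matrix (Fin m) (Fin m) ℝ)
    (hseq : ∃ x : ℕ → Fin m → ℝ,
      (∀ n, x n ∈ LinearMap.range A.mulVecLin) ∧
      Tendsto (fun n => ‖x n‖) atTop atTop ∧
      Tendsto (fun n => x n + A.mulVec (fun i => (x n i) ^ 3)) atTop (nhds 0)) :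
    (¬ ∀ K : Set (Fin m → ℝ), IsCompact K →
        IsCompact ((fun x => x + fun i => (A.mulVec x i) ^ 3) ⁻¹' K)) ∧
    ∃ y : ℕ → Fin m → ℝ,
      Tendsto (fun n => ‖y n‖) atTop atTop ∧
      Tendsto (fun n => y n + fun i => (A.mulVec (y n) i) ^ 3) atTop (nhds 0) := by
  obtain ⟨x, hxr, hxn, hx0⟩ := hseq
  set L := A.mulVecLin with hL
  -- a linear right inverse of L on its range
  obtain ⟨B, hB⟩ := L.rangeRestrict.exists_rightInverse_of_surjective
    (LinearMap.range_rangeRestrict L)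
  set cube : ℕ → Fin m → ℝ := fun n i => (x n i) ^ 3 with hcube
  set b : ℕ → Fin m → ℝ := fun n => x n + A.mulVec (cube n) with hb
  have hmem : ∀ n, b n ∈ LinearMap.range L := fun n =>
    Submodule.add_mem _ (hxr n) ⟨cube n, rfl⟩
  set v : ℕ → Fin m → ℝ := fun n => B ⟨b n, hmem n⟩ with hv
  have hLB : ∀ n, L (v n) = b n := by
    intro n
    have := LinearMap.ext_iff.mp hB ⟨b n, hmem n⟩
    exact congrArg Subtype.val this
  -- v n → 0
  have hv0 : Tendsto v atTop (nhds 0) := by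
    have hcont : Continuous B := B.continuous_of_finiteDimensional
    have hs : Tendsto (fun n => (⟨b n, hmem n⟩ : LinearMap.range L)) atTop (nhds 0) := by
      rw [tendsto_subtype_rng]
      exact hx0
    have := (hcont.tendsto 0).comp hs
    rw [map_zero] at this
    exact this
  set z : ℕ → Fin m → ℝ := fun n => v n - cube n with hz
  -- A z n = x n
  have hAz : ∀ n, A.mulVec (z n) = x n := by
    intro n
    have : A.mulVec (z n) = L (v n) - L (cube n) := by
      simp only [hz, hL, ← map_sub]
      rfl
    rw [this, hLB n]
    simp [hb, hL, Matrix.mulVecLin_apply]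
  -- F (z n) = v n
  have hFz : ∀ n, (z n + fun i => (A.mulVec (z n) i) ^ 3) = v n := by
    intro n
    funext i
    rw [hAz n]
    simp [hz, hcube, Pi.add_apply, Pi.sub_apply]
  have hvnorm : Tendsto (fun n => ‖v n‖) atTop (nhds 0) := by
    simpa using hv0.norm
  -- ‖x n‖ ≤ 1 + ‖cube n‖
  have hxc : ∀ n, ‖x n‖ ≤ 1 + ‖cube n‖ := by
    intro n
    have h1 : (0:ℝ) ≤ 1 + ‖cube n‖ := by positivity
    rw [pi_norm_le_iff_of_nonneg h1]
    intro i
    have h2 : ‖(cube n) i‖ ≤ ‖cube n‖ := norm_le_pi_norm (cube n) i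
    have h3 : ‖(cube n) i‖ = |x n i| ^ 3 := by
      simp [hcube, abs_pow]
    have h4 : |x n i| ≤ 1 + |x n i| ^ 3 := by
      nlinarith [abs_nonneg (x n i), mul_nonneg (abs_nonneg (x n i)) (sq_nonneg (|x n i| - 1)),
        sq_nonneg (2 * |x n i| - 1)]
    calc ‖x n i‖ = |x n i| := rfl
      _ ≤ 1 + |x n i| ^ 3 := h4
      _ = 1 + ‖(cube n) i‖ := by rw [h3]
      _ ≤ 1 + ‖cube n‖ := by linarith
  -- ‖z n‖ → ∞
  have hzbound : ∀ n, ‖x n‖ - 1 - ‖v n‖ ≤ ‖z n‖ := by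
    intro n
    have h5 : ‖cube n‖ - ‖v n‖ ≤ ‖z n‖ := by
      have := norm_sub_norm_le (cube n) (v n)
      have h6 : ‖cube n - v n‖ = ‖z n‖ := by rw [hz]; exact (norm_sub_rev _ _)
      linarith
    have := hxc n
    linarith
  have hzn : Tendsto (fun n => ‖z n‖) atTop atTop := by
    have h7 : Tendsto (fun n => ‖x n‖ - 1 - ‖v n‖) atTop atTop := by
      have h8 : Tendsto (fun n => (-1 : ℝ) - ‖v n‖) atTop (nhds (-1 - 0)) :=
        (tendsto_const_nhds).sub hvnorm
      have := hxn.atTop_add h8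
      simpa [sub_eq_add_neg, add_comm, add_left_comm, add_assoc] using this
    exact tendsto_atTop_mono hzbound h7
  have hFz0 : Tendsto (fun n => z n + fun i => (A.mulVec (z n) i) ^ 3) atTop (nhds 0) := by
    simpa [hFz] using hv0
  refine ⟨?_, z, hzn, hFz0⟩
  intro hprop
  have hK := hprop (Metric.closedBall 0 1) (isCompact_closedBall 0 1)
  obtain ⟨C, hC⟩ := (Bornology.IsBounded.subset_ball_lt hK.isBounded 0 0)
  have hev1 : ∀ᶠ n in atTop, z n ∈ (fun x => x + fun i => (A.mulVec x i) ^ 3) ⁻¹'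
      Metric.closedBall 0 1 := by
    have := (Metric.tendsto_nhds.mp hFz0) 1 one_pos
    filter_upwards [this] with n hn
    simp only [Set.mem_preimage, Metric.mem_closedBall]
    exact le_of_lt hn
  have hev2 : ∀ᶠ n in atTop, C < ‖z n‖ := hzn.eventually_gt_atTop C
  obtain ⟨n, hn1, hn2⟩ := (hev1.and hev2).exists
  have := hC.2 hn1
  rw [Metric.mem_ball, dist_zero_right] at this
  linarith
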